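/- Let N ≥ 2 and m ≥ 1 be natural numbers and let e_1, …, e_m be natural numbers with e_k < N for every k ∈ {1,…,m}. If ∏_{k=1}^m (1 + N^k)^{e_k} = 1 in the ring ZMod (N^{m+1}), then e_k = 0 for every k ∈ {1,…,m}. -/

import Mathlib

lemma one_add_pow_of_sq_zero {R : Type*} [CommRing R] (x : R) (hx : x ^ 2 = 0) :
    ∀ t : ℕ, (1 + x) ^ t = 1 + (t : R) * x := by
  intro t
  induction t with
  | zero => simp
  | succ t ih =>
    have : (1 + (t : R) * x) * (1 + x) = 1 + ((t : R) + 1) * x + (t : R) * x ^ 2 := by ring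
    rw [pow_succ, ih, this, hx]
    push_cast
    ring

/-- Let `N ≥ 2`, `m ≥ 1` and `e : ℕ → ℕ` with `e k < N` for every `k ∈ {1,…,m}`.
If `∏_{k=1}^m (1 + N^k)^(e k) = 1` in `ZMod (N^(m+1))`, then `e k = 0` for every
`k ∈ {1,…,m}`. -/
theorem prod_one_add_pow_eq_one_iff_exponents_zero
    (N m : ℕ) (hN : 2 ≤ N) (hm : 1 ≤ m) (e : ℕ → ℕ)
    (he : ∀ k ∈ Finset.Icc 1 m, e k < N)
    (hprod : ∏ k ∈ Finset.Icc 1 m,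
        ((1 : ZMod (N ^ (m + 1))) + (N : ZMod (N ^ (m + 1))) ^ k) ^ (e k) = 1) :
    ∀ k ∈ Finset.Icc 1 m, e k = 0 := by
  intro j
  induction j using Nat.strong_induction_on with
  | _ j IH =>
    intro hj
    obtain ⟨hj1, hjm⟩ := Finset.mem_Icc.mp hj
    have hNpos : 0 < N := by omega
    have hne : NeZero (N ^ (j + 1)) := ⟨pow_ne_zero _ (by omega)⟩
    have hdvd : N ^ (j + 1) ∣ N ^ (m + 1) := pow_dvd_pow N (by omega)
    -- cast the hypothesis down to ZMod (N^(j+1))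
    have h1 : ∏ k ∈ Finset.Icc 1 m,
        ((1 : ZMod (N ^ (j + 1))) + (N : ZMod (N ^ (j + 1))) ^ k) ^ (e k) = 1 := by
      have := congrArg (ZMod.castHom hdvd (ZMod (N ^ (j + 1)))) hprod
      simp only [map_prod, map_pow, map_add, map_one, map_natCast] at this
      simpa using this
    -- all factors except k = j are 1
    have hside : ∀ k ∈ Finset.Icc 1 m, k ≠ j →
        ((1 : ZMod (N ^ (j + 1))) + (N : ZMod (N ^ (j + 1))) ^ k) ^ (e k) = 1 := by
      intro k hk hkj
      obtain ⟨hk1, hkm⟩ := Finset.mem_Icc.mp hk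
      rcases lt_or_gt_of_ne hkj with hlt | hgt
      · rw [IH k hlt hk]; simp
      · have hz : ((N : ZMod (N ^ (j + 1)))) ^ k = 0 := by
          have : ((N ^ k : ℕ) : ZMod (N ^ (j + 1))) = 0 := by
            rw [ZMod.natCast_eq_zero_iff]
            exact pow_dvd_pow N (by omega)
          simpa using this
        rw [hz]; simp
    have h2 : ((1 : ZMod (N ^ (j + 1))) + (N : ZMod (N ^ (j + 1))) ^ j) ^ (e j) = 1 := by
      have h2' := Finset.prod_eq_single_of_mem
        (f := fun k => ((1 : ZMod (N ^ (j + 1))) + (N : ZMod (N ^ (j + 1))) ^ k) ^ (e k)) j hj hside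
      rw [h2'] at h1
      exact h1
    -- (N^j)^2 = 0 in ZMod (N^(j+1))
    have hsq : ((N : ZMod (N ^ (j + 1))) ^ j) ^ 2 = 0 := by
      have : ((N ^ (2 * j) : ℕ) : ZMod (N ^ (j + 1))) = 0 := by
        rw [ZMod.natCast_eq_zero_iff]
        exact pow_dvd_pow N (by omega)
      rw [← pow_mul, mul_comm]
      simpa using this
    rw [one_add_pow_of_sq_zero _ hsq] at h2
    have h3 : ((e j * N ^ j : ℕ) : ZMod (N ^ (j + 1))) = 0 := by
      push_cast
      linear_combination h2
    rw [ZMod.natCast_eq_zero_iff] at h3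
    have hNdvd : N ∣ e j := by
      have h4 : N ^ j * N ∣ N ^ j * e j := by
        rw [mul_comm (e j)] at h3
        rwa [pow_succ] at h3
      exact (Nat.mul_dvd_mul_iff_left (Nat.pow_pos (n := j) hNpos)).mp h4
    exact Nat.eq_zero_of_dvd_of_lt hNdvd (he j hj)
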